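/- (One-step L¹-Lipschitz continuity in time.) Assume hypothesis (H2), that Σ_{j∈ℤ} |ρ_{j+1} − ρ_j| < ∞, and that the CFL condition λ ≤ min{(8 − 27α)/(27L), 2/(27L), α/L} holds. Then Δx·Σ_{j∈ℤ} |ρ'_j − ρ_j| ≤ Δt·((1/λ)·Σ_{j∈ℤ} |ρ_{j+1} − ρ_j| + J), where J := M·(sup |μ'|)·(1 + θ)²·m²·(α + λ·L + (1 + λ·L)²). -/

import Mathlib

open MeasureTheory

noncomputable section

/-- minmod limiter of three arguments. -/
def minmod3 (a b c : ℝ) : ℝ :=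
  if 0 < a ∧ 0 < b ∧ 0 < c then min a (min b c)
  else if a < 0 ∧ b < 0 ∧ c < 0 then max a (max b c)
  else 0

/-- MUSCL slopes `σ_j = 2θ·minmod(ρ_j − ρ_{j−1}, (ρ_{j+1} − ρ_{j−1})/2, ρ_{j+1} − ρ_j)`. -/
def slp (θ : ℝ) (ρ : ℤ → ℝ) (j : ℤ) : ℝ :=
  2 * θ * minmod3 (ρ j - ρ (j - 1)) ((ρ (j + 1) - ρ (j - 1)) / 2) (ρ (j + 1) - ρ j)

/-- left interface value `ρ⁻_{j+1/2} = ρ_j + σ_j/2`. -/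
def intL (θ : ℝ) (ρ : ℤ → ℝ) (j : ℤ) : ℝ := ρ j + slp θ ρ j / 2

/-- right interface value `ρ⁺_{j−1/2} = ρ_j − σ_j/2`. -/
def intR (θ : ℝ) (ρ : ℤ → ℝ) (j : ℤ) : ℝ := ρ j - slp θ ρ j / 2

/-- discrete convolution `A_j = Δx·Σ_l μ((j−l)Δx)·ρ_l`. -/
def Adisc (μ : ℝ → ℝ) (Δx : ℝ) (ρ : ℤ → ℝ) (j : ℤ) : ℝ :=
  Δx * ∑' l : ℤ, μ (((j : ℝ) - (l : ℝ)) * Δx) * ρ l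

/-- `s_j = θ·(A_{j+1} − A_{j−1})`. -/
def sdisc (μ : ℝ → ℝ) (θ Δx : ℝ) (ρ : ℤ → ℝ) (j : ℤ) : ℝ :=
  θ * (Adisc μ Δx ρ (j + 1) - Adisc μ Δx ρ (j - 1))

/-- `A⁻_{j+1/2} = A_j + s_j/2`. -/
def AdiscL (μ : ℝ → ℝ) (θ Δx : ℝ) (ρ : ℤ → ℝ) (j : ℤ) : ℝ :=
  Adisc μ Δx ρ j + sdisc μ θ Δx ρ j / 2

/-- `A⁺_{j−1/2} = A_j − s_j/2`. -/
def AdiscR (μ : ℝ → ℝ) (θ Δx : ℝ) (ρ : ℤ → ℝ) (j : ℤ) : ℝ :=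
  Adisc μ Δx ρ j - sdisc μ θ Δx ρ j / 2

/-- mid-time value `ρ^{½,−}_{j+1/2}`. -/
def midL (f : ℝ → ℝ → ℝ) (μ : ℝ → ℝ) (θ lam Δx : ℝ) (ρ : ℤ → ℝ) (j : ℤ) : ℝ :=
  intL θ ρ j - lam / 2 *
    (f (intL θ ρ j) (AdiscL μ θ Δx ρ j) - f (intR θ ρ j) (AdiscR μ θ Δx ρ j))

/-- mid-time value `ρ^{½,+}_{j−1/2}`. -/
def midR (f : ℝ → ℝ → ℝ) (μ : ℝ → ℝ) (θ lam Δx : ℝ) (ρ : ℤ → ℝ) (j : ℤ) : ℝ :=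
  intR θ ρ j - lam / 2 *
    (f (intL θ ρ j) (AdiscL μ θ Δx ρ j) - f (intR θ ρ j) (AdiscR μ θ Δx ρ j))

/-- mid-time convolution `A^{½}_{j+1/2}`. -/
def Amid (f : ℝ → ℝ → ℝ) (μ : ℝ → ℝ) (θ lam Δx : ℝ) (ρ : ℤ → ℝ) (j : ℤ) : ℝ :=
  Δx / 2 * ∑' l : ℤ,
    (μ (((j : ℝ) + 1 - (l : ℝ)) * Δx) * midR f μ θ lam Δx ρ l +
     μ (((j : ℝ) - (l : ℝ)) * Δx) * midL f μ θ lam Δx ρ l)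

/-- Lax–Friedrichs type numerical flux `F(u,v,A)`. -/
def numFlux (f : ℝ → ℝ → ℝ) (α lam u v A : ℝ) : ℝ :=
  (f u A + f v A) / 2 - α * (v - u) / (2 * lam)

/-- MUSCL–Hancock update `ρ'_j`. -/
def mhUpdate (f : ℝ → ℝ → ℝ) (μ : ℝ → ℝ) (θ α lam Δx : ℝ) (ρ : ℤ → ℝ) (j : ℤ) : ℝ :=
  ρ j - lam *
    (numFlux f α lam (midL f μ θ lam Δx ρ j) (midR f μ θ lam Δx ρ (j + 1))
        (Amid f μ θ lam Δx ρ j) -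
     numFlux f α lam (midL f μ θ lam Δx ρ (j - 1)) (midR f μ θ lam Δx ρ j)
        (Amid f μ θ lam Δx ρ (j - 1)))


/-! ### Auxiliary lemmas -/

lemma minmod3_bounds (a b c : ℝ) :
    min a 0 ≤ minmod3 a b c ∧ minmod3 a b c ≤ max a 0 ∧
    min c 0 ≤ minmod3 a b c ∧ minmod3 a b c ≤ max c 0 := by
  unfold minmod3
  split_ifs with h1 h2
  · obtain ⟨ha, hb, hc⟩ := h1
    have h0 : (0:ℝ) ≤ min a (min b c) := le_min ha.le (le_min hb.le hc.le)
    exact ⟨le_trans (min_le_right a 0) h0,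
      le_trans (min_le_left a (min b c)) (le_max_left a 0),
      le_trans (min_le_right c 0) h0,
      le_trans (le_trans (min_le_right a (min b c)) (min_le_right b c)) (le_max_left c 0)⟩
  · obtain ⟨ha, hb, hc⟩ := h2
    have h0 : max a (max b c) ≤ 0 := max_le ha.le (max_le hb.le hc.le)
    exact ⟨le_trans (min_le_left a 0) (le_max_left a (max b c)), le_trans h0 (le_max_right a 0),
      le_trans (min_le_left c 0) (le_trans (le_max_right b c) (le_max_right a (max b c))),
      le_trans h0 (le_max_right c 0)⟩
  · exact ⟨min_le_right a 0, le_max_right a 0, min_le_right c 0, le_max_right c 0⟩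

lemma lip_of_deriv_bound {g : ℝ → ℝ} (hg : Differentiable ℝ g) {C : ℝ}
    (hC : ∀ x, |deriv g x| ≤ C) (u v : ℝ) : |g u - g v| ≤ C * |u - v| := by
  have := convex_univ.norm_image_sub_le_of_norm_deriv_le (f := g)
    (fun x _ => hg x) (fun x _ => by simpa [Real.norm_eq_abs] using hC x)
    (Set.mem_univ v) (Set.mem_univ u)
  simpa [Real.norm_eq_abs] using this

lemma diff_fst {f : ℝ → ℝ → ℝ} (hf : ContDiff ℝ 2 (Function.uncurry f)) (A : ℝ) :
    Differentiable ℝ (fun x => f x A) :=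
  (hf.differentiable two_ne_zero).comp (Differentiable.prodMk differentiable_fun_id (differentiable_const A))

lemma diff_snd {f : ℝ → ℝ → ℝ} (hf : ContDiff ℝ 2 (Function.uncurry f)) (r : ℝ) :
    Differentiable ℝ (f r) :=
  (hf.differentiable two_ne_zero).comp (Differentiable.prodMk (differentiable_const r) differentiable_fun_id)

lemma shift_summable {g : ℤ → ℝ} (hg : Summable g) (k : ℤ) :
    Summable (fun j => g (j + k)) := (Equiv.addRight k).summable_iff.2 hg

lemma shift_tsum (g : ℤ → ℝ) (k : ℤ) : ∑' j : ℤ, g (j + k) = ∑' j, g j :=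
  (Equiv.addRight k).tsum_eq g

lemma midstep_bound {lam iLj iLj' dfj dfj' bL g g' : ℝ} (hlam : 0 ≤ lam)
    (h1 : |iLj - iLj'| ≤ bL) (h2 : |dfj| ≤ g) (h3 : |dfj'| ≤ g') :
    |iLj - lam / 2 * dfj - (iLj' - lam / 2 * dfj')| ≤ bL + lam/2*(g + g') := by
  have e : iLj - lam / 2 * dfj - (iLj' - lam / 2 * dfj')
      = (iLj - iLj') - lam/2*(dfj - dfj') := by ring
  rw [e]
  have t : |lam/2*(dfj - dfj')| ≤ lam/2*(g + g') := by
    rw [abs_mul, abs_of_nonneg (by linarith : (0:ℝ) ≤ lam/2)]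
    exact mul_le_mul_of_nonneg_left ((abs_sub _ _).trans (by linarith)) (by linarith)
  calc |(iLj - iLj') - lam/2*(dfj - dfj')| ≤ |iLj - iLj'| + |lam/2*(dfj - dfj')| :=
        abs_sub _ _
    _ ≤ bL + lam/2*(g + g') := by linarith

/-- the auxiliary majorant for `|Δf_j|`. -/
def gfun (θ L M Cμ' Δx m0 : ℝ) (ρ : ℤ → ℝ) (j : ℤ) : ℝ :=
  2*θ*L*|ρ (j+1) - ρ j| + M*(ρ j + θ*|ρ j - ρ (j-1)|)*(2*θ*Cμ'*Δx^2*m0)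

/-- majorant for `|midL|`. -/
def WLf (θ lam L : ℝ) (ρ : ℤ → ℝ) (j : ℤ) : ℝ := intL θ ρ j + lam*L*ρ j

/-- majorant for `|midR|`. -/
def WRf (θ lam L : ℝ) (ρ : ℤ → ℝ) (j : ℤ) : ℝ := intR θ ρ j + lam*L*ρ j

/-- majorant for `|F_{j+1/2} - F_{j-1/2}|`. -/
def Gfun (θ lam L α M KA Cμ' Δx m0 : ℝ) (ρ : ℤ → ℝ) (j : ℤ) : ℝ :=
  (L/2 + α/(2*lam)) * ((1+θ)*|ρ j - ρ (j-1)| + (1+θ)*|ρ (j+1) - ρ j|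
    + lam/2 * (gfun θ L M Cμ' Δx m0 ρ (j-1) + 2 * gfun θ L M Cμ' Δx m0 ρ j
        + gfun θ L M Cμ' Δx m0 ρ (j+1)))
  + M*KA/2 * (WLf θ lam L ρ (j-1) + WRf θ lam L ρ j)

lemma fluxdiff_bound (f : ℝ → ℝ → ℝ) {α lam L M : ℝ} (hlam : 0 < lam) (hL0 : 0 ≤ L)
    (hM0 : 0 ≤ M) (hα0 : 0 ≤ α)
    (flip1 : ∀ u v A : ℝ, |f u A - f v A| ≤ L * |u - v|)
    (flip2 : ∀ r a b : ℝ, |f r a - f r b| ≤ M * |r| * |a - b|)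
    {uL uL' uR uR' A A' bL bR wL wR kA : ℝ}
    (hbL : |uL - uL'| ≤ bL) (hbR : |uR - uR'| ≤ bR)
    (hwL : |uL'| ≤ wL) (hwR : |uR'| ≤ wR) (hkA : |A - A'| ≤ kA)
    (hwL0 : 0 ≤ wL) (hwR0 : 0 ≤ wR) (hkA0 : 0 ≤ kA) :
    |numFlux f α lam uL uR A - numFlux f α lam uL' uR' A'| ≤
      (L/2 + α/(2*lam)) * (bL + bR) + M*kA/2 * (wL + wR) := by
  have e : numFlux f α lam uL uR A - numFlux f α lam uL' uR' A'
      = (f uL A - f uL' A')/2 + (f uR A - f uR' A')/2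
        - α/(2*lam)*((uR - uR') - (uL - uL')) := by
    unfold numFlux; field_simp; ring
  rw [e]
  have t1 : |f uL A - f uL' A'| ≤ L * bL + M * wL * kA := by
    have a1 := flip1 uL uL' A
    have a2 := flip2 uL' A A'
    have a3 := abs_sub_le (f uL A) (f uL' A) (f uL' A')
    have a4 : L * |uL - uL'| ≤ L * bL := mul_le_mul_of_nonneg_left hbL hL0
    have a5 : M * |uL'| * |A - A'| ≤ M * wL * kA :=
      mul_le_mul (mul_le_mul_of_nonneg_left hwL hM0) hkA (abs_nonneg _)
        (mul_nonneg hM0 hwL0)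
    linarith
  have t2 : |f uR A - f uR' A'| ≤ L * bR + M * wR * kA := by
    have a1 := flip1 uR uR' A
    have a2 := flip2 uR' A A'
    have a3 := abs_sub_le (f uR A) (f uR' A) (f uR' A')
    have a4 : L * |uR - uR'| ≤ L * bR := mul_le_mul_of_nonneg_left hbR hL0
    have a5 : M * |uR'| * |A - A'| ≤ M * wR * kA :=
      mul_le_mul (mul_le_mul_of_nonneg_left hwR hM0) hkA (abs_nonneg _)
        (mul_nonneg hM0 hwR0)
    linarith
  have t3 : α/(2*lam) * |(uR - uR') - (uL - uL')| ≤ α/(2*lam) * (bR + bL) :=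
    mul_le_mul_of_nonneg_left ((abs_sub _ _).trans (by linarith)) (by positivity)
  have h1 := abs_add_le ((f uL A - f uL' A')/2 + (f uR A - f uR' A')/2)
      (-(α/(2*lam)*((uR - uR') - (uL - uL'))))
  have h2 := abs_add_le ((f uL A - f uL' A')/2) ((f uR A - f uR' A')/2)
  rw [← sub_eq_add_neg, abs_neg] at h1
  have e1 : |(f uL A - f uL' A')/2| = |f uL A - f uL' A'|/2 := by
    rw [abs_div, abs_two]
  have e2 : |(f uR A - f uR' A')/2| = |f uR A - f uR' A'|/2 := by
    rw [abs_div, abs_two]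
  have e3 : |α/(2*lam)*((uR - uR') - (uL - uL'))|
      = α/(2*lam) * |(uR - uR') - (uL - uL')| := by
    rw [abs_mul, abs_of_nonneg (by positivity : (0:ℝ) ≤ α/(2*lam))]
  linarith

set_option maxHeartbeats 2000000 in
/-- one-step L¹-Lipschitz continuity in time. -/
theorem stmt8 (f : ℝ → ℝ → ℝ) (μ : ℝ → ℝ) (Δx Δt lam θ α L M Cμ' : ℝ)
    (hΔx : 0 < Δx) (hΔt : 0 < Δt) (hlam : lam = Δt / Δx)
    (hθ0 : 0 ≤ θ) (hθ1 : θ ≤ 1 / 2) (hα0 : 0 < α) (hα1 : α < 8 / 27)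
    (hf : ContDiff ℝ 2 (Function.uncurry f)) (hf0 : ∀ A : ℝ, f 0 A = 0)
    (hL : ∀ r A : ℝ, |deriv (fun x => f x A) r| ≤ L)
    (hM : 0 < M) (hdA : ∀ r a : ℝ, |deriv (f r) a| ≤ M * |r|)
    (hdAA : ∀ r a : ℝ, |iteratedDeriv 2 (f r) a| ≤ M * |r|)
    (hμ : ContDiff ℝ 2 μ) (hμc : HasCompactSupport μ)
    (hCμ' : ∀ x : ℝ, |deriv μ x| ≤ Cμ')
    (hCFL : lam ≤ min ((8 - 27 * α) / (27 * L)) (min (2 / (27 * L)) (α / L)))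
    (ρ : ℤ → ℝ) (hρ : ∀ j : ℤ, 0 ≤ ρ j) (hsum : Summable ρ)
    (hTV : Summable (fun j : ℤ => |ρ (j + 1) - ρ j|)) :
    Δx * (∑' j : ℤ, |mhUpdate f μ θ α lam Δx ρ j - ρ j|) ≤
      Δt * ((1 / lam) * (∑' j : ℤ, |ρ (j + 1) - ρ j|) +
        M * Cμ' * (1 + θ) ^ 2 * (Δx * ∑' l : ℤ, ρ l) ^ 2 *
          (α + lam * L + (1 + lam * L) ^ 2)) := by
  -- ## basic positivity
  have hlam0 : 0 < lam := hlam ▸ div_pos hΔt hΔx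
  have hθ2 : (0:ℝ) ≤ 2 * θ := by linarith
  have hL0 : 0 < L := by
    by_contra h
    push_neg at h
    have h1 : α / L ≤ 0 := div_nonpos_of_nonneg_of_nonpos hα0.le h
    have h2 : lam ≤ α / L := le_trans hCFL (le_trans (min_le_right _ _) (min_le_right _ _))
    linarith
  have hlamL : lam * L ≤ α := by
    have h2 : lam ≤ α / L := le_trans hCFL (le_trans (min_le_right _ _) (min_le_right _ _))
    rwa [le_div_iff₀ hL0] at h2
  have hlamL2 : lam * L ≤ 2 / 27 := by
    have h2 : lam ≤ 2 / (27 * L) := le_trans hCFL (le_trans (min_le_right _ _) (min_le_left _ _))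
    rw [le_div_iff₀ (by positivity)] at h2
    linarith
  have hlamL0 : 0 ≤ lam * L := by positivity
  have hCμ0 : 0 ≤ Cμ' := le_trans (abs_nonneg _) (hCμ' 0)
  -- Lipschitz facts
  have flip1 : ∀ u v A : ℝ, |f u A - f v A| ≤ L * |u - v| :=
    fun u v A => lip_of_deriv_bound (diff_fst hf A) (fun x => hL x A) u v
  have fbnd : ∀ u A : ℝ, |f u A| ≤ L * |u| := fun u A => by
    simpa [hf0 A] using flip1 u 0 A
  have flip2 : ∀ r a b : ℝ, |f r a - f r b| ≤ M * |r| * |a - b| :=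
    fun r a b => lip_of_deriv_bound (diff_snd hf r) (fun x => hdA r x) a b
  have mulip : ∀ x y : ℝ, |μ x - μ y| ≤ Cμ' * |x - y| :=
    lip_of_deriv_bound (hμ.differentiable two_ne_zero) hCμ'
  obtain ⟨Cμ, hCμb⟩ := hμ.continuous.bounded_above_of_compact_support hμc
  have hCμb' : ∀ x : ℝ, |μ x| ≤ Cμ := fun x => by
    simpa [Real.norm_eq_abs] using hCμb x
  -- basic sums
  set m0 := ∑' l : ℤ, ρ l with hm0def
  set TV := ∑' j : ℤ, |ρ (j + 1) - ρ j| with hTVdef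
  have hm00 : 0 ≤ m0 := tsum_nonneg hρ
  have hTV0 : 0 ≤ TV := tsum_nonneg (fun _ => abs_nonneg _)
  have hsum1 : Summable (fun j : ℤ => ρ (j + 1)) := shift_summable hsum 1
  have hTVle : TV ≤ 2 * m0 := by
    have hb : ∀ j : ℤ, |ρ (j + 1) - ρ j| ≤ ρ (j + 1) + ρ j := fun j =>
      (abs_sub _ _).trans (by rw [abs_of_nonneg (hρ _), abs_of_nonneg (hρ _)])
    calc TV ≤ ∑' j : ℤ, (ρ (j + 1) + ρ j) := Summable.tsum_le_tsum hb hTV (hsum1.add hsum)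
      _ = (∑' j : ℤ, ρ (j + 1)) + m0 := Summable.tsum_add hsum1 hsum
      _ = 2 * m0 := by rw [shift_tsum ρ 1, ← hm0def]; ring
  have hTVm : Summable (fun j : ℤ => |ρ j - ρ (j - 1)|) := by
    refine (shift_summable hTV (-1)).congr (fun j => ?_)
    have e1 : j + -1 + 1 = j := by ring
    have e2 : j + -1 = j - 1 := by ring
    rw [e1, e2]
  have hTVmeq : ∑' j : ℤ, |ρ j - ρ (j - 1)| = TV := by
    rw [hTVdef, ← shift_tsum (fun j : ℤ => |ρ (j + 1) - ρ j|) (-1)]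
    refine tsum_congr fun j => ?_
    have e1 : j + -1 + 1 = j := by ring
    have e2 : j + -1 = j - 1 := by ring
    rw [e1, e2]
  -- ## slope estimates
  have hmin : ∀ x : ℝ, -|x| ≤ min x 0 :=
    fun x => le_min (neg_abs_le x) (neg_nonpos.2 (abs_nonneg x))
  have hmax : ∀ x : ℝ, max x 0 ≤ |x| := fun x => max_le (le_abs_self x) (abs_nonneg x)
  have hσb : ∀ j : ℤ, 2*θ*min (ρ j - ρ (j-1)) 0 ≤ slp θ ρ j ∧
      slp θ ρ j ≤ 2*θ*max (ρ j - ρ (j-1)) 0 ∧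
      2*θ*min (ρ (j+1) - ρ j) 0 ≤ slp θ ρ j ∧
      slp θ ρ j ≤ 2*θ*max (ρ (j+1) - ρ j) 0 := by
    intro j
    obtain ⟨h1, h2, h3, h4⟩ :=
      minmod3_bounds (ρ j - ρ (j-1)) ((ρ (j+1) - ρ (j-1))/2) (ρ (j+1) - ρ j)
    unfold slp
    exact ⟨mul_le_mul_of_nonneg_left h1 hθ2, mul_le_mul_of_nonneg_left h2 hθ2,
      mul_le_mul_of_nonneg_left h3 hθ2, mul_le_mul_of_nonneg_left h4 hθ2⟩
  have hσabs : ∀ j : ℤ, |slp θ ρ j| ≤ 2*θ*|ρ (j+1) - ρ j| ∧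
      |slp θ ρ j| ≤ 2*θ*|ρ j - ρ (j-1)| := by
    intro j
    obtain ⟨h1, h2, h3, h4⟩ := hσb j
    constructor <;> rw [abs_le] <;> constructor
    · linarith [mul_le_mul_of_nonneg_left (hmin (ρ (j+1) - ρ j)) hθ2]
    · linarith [mul_le_mul_of_nonneg_left (hmax (ρ (j+1) - ρ j)) hθ2]
    · linarith [mul_le_mul_of_nonneg_left (hmin (ρ j - ρ (j-1))) hθ2]
    · linarith [mul_le_mul_of_nonneg_left (hmax (ρ j - ρ (j-1))) hθ2]
  have hσdiff : ∀ j : ℤ, |slp θ ρ j - slp θ ρ (j-1)| ≤ 2*θ*|ρ j - ρ (j-1)| := by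
    intro j
    obtain ⟨h1, h2, _, _⟩ := hσb j
    obtain ⟨_, _, h3, h4⟩ := hσb (j-1)
    rw [show j - 1 + 1 = j from by ring] at h3 h4
    rcases le_or_gt 0 (ρ j - ρ (j-1)) with h | h
    · rw [abs_of_nonneg h]
      rw [min_eq_right h] at h1 h3
      rw [max_eq_left h] at h2 h4
      rw [mul_zero] at h1 h3
      rw [abs_le]; constructor <;> linarith
    · rw [abs_of_neg h]
      rw [min_eq_left h.le] at h1 h3
      rw [max_eq_right h.le] at h2 h4
      rw [mul_zero] at h2 h4
      rw [abs_le]; constructor <;> linarith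
  -- interface values
  have hintL0 : ∀ j : ℤ, 0 ≤ intL θ ρ j := by
    intro j
    obtain ⟨_, _, h3, _⟩ := hσb j
    have hm' : -(ρ j) ≤ min (ρ (j+1) - ρ j) 0 :=
      le_min (by linarith [hρ (j+1)]) (by linarith [hρ j])
    have h5 := mul_le_mul_of_nonneg_left hm' hθ2
    unfold intL
    nlinarith [hρ j, mul_nonneg (show (0:ℝ) ≤ 1 - θ by linarith) (hρ j)]
  have hintR0 : ∀ j : ℤ, 0 ≤ intR θ ρ j := by
    intro j
    obtain ⟨_, h2, _, _⟩ := hσb j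
    have hm' : max (ρ j - ρ (j-1)) 0 ≤ ρ j := max_le (by linarith [hρ (j-1)]) (hρ j)
    have h5 := mul_le_mul_of_nonneg_left hm' hθ2
    unfold intR
    nlinarith [hρ j, mul_nonneg (show (0:ℝ) ≤ 1 - θ by linarith) (hρ j)]
  have hintLle : ∀ j : ℤ, intL θ ρ j ≤ ρ j + θ * |ρ (j+1) - ρ j| := by
    intro j
    unfold intL
    linarith [le_abs_self (slp θ ρ j), (hσabs j).1]
  have hintRle : ∀ j : ℤ, intR θ ρ j ≤ ρ j + θ * |ρ j - ρ (j-1)| := by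
    intro j
    unfold intR
    linarith [neg_abs_le (slp θ ρ j), (hσabs j).2]
  have hintsum : ∀ j : ℤ, intL θ ρ j + intR θ ρ j = 2 * ρ j := fun j => by
    unfold intL intR; ring
  have haL : ∀ j : ℤ, |intL θ ρ j - intL θ ρ (j-1)| ≤ (1+θ) * |ρ j - ρ (j-1)| := by
    intro j
    have e : intL θ ρ j - intL θ ρ (j-1)
        = (ρ j - ρ (j-1)) + (slp θ ρ j - slp θ ρ (j-1)) / 2 := by unfold intL; ring
    rw [e]
    refine (abs_add_le _ _).trans ?_
    rw [abs_div, abs_two]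
    linarith [hσdiff j]
  have haR : ∀ j : ℤ, |intR θ ρ (j+1) - intR θ ρ j| ≤ (1+θ) * |ρ (j+1) - ρ j| := by
    intro j
    have h := hσdiff (j+1)
    rw [show j + 1 - 1 = j from by ring] at h
    have e : intR θ ρ (j+1) - intR θ ρ j
        = (ρ (j+1) - ρ j) - (slp θ ρ (j+1) - slp θ ρ j) / 2 := by unfold intR; ring
    rw [e]
    refine (abs_sub _ _).trans ?_
    rw [abs_div, abs_two]
    linarith [h]
  -- ## convolution estimates
  have hconv : ∀ x : ℝ, Summable (fun l : ℤ => μ ((x - (l:ℝ)) * Δx) * ρ l) := by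
    intro x
    refine Summable.of_norm_bounded (hsum.mul_left Cμ) (fun l => ?_)
    rw [norm_mul, Real.norm_eq_abs, Real.norm_eq_abs, abs_of_nonneg (hρ l)]
    exact mul_le_mul_of_nonneg_right (hCμb' _) (hρ l)
  have hAdiff : ∀ j k : ℤ, |Adisc μ Δx ρ j - Adisc μ Δx ρ k|
      ≤ Cμ' * |(j:ℝ) - (k:ℝ)| * Δx^2 * m0 := by
    intro j k
    unfold Adisc
    rw [← mul_sub, ← Summable.tsum_sub (hconv (j:ℝ)) (hconv (k:ℝ)), abs_mul, abs_of_pos hΔx]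
    have hb : ∀ l : ℤ, ‖μ (((j:ℝ) - (l:ℝ)) * Δx) * ρ l - μ (((k:ℝ) - (l:ℝ)) * Δx) * ρ l‖
        ≤ (Cμ' * |(j:ℝ) - (k:ℝ)| * Δx) * ρ l := by
      intro l
      rw [← sub_mul, Real.norm_eq_abs, abs_mul, abs_of_nonneg (hρ l)]
      refine mul_le_mul_of_nonneg_right ?_ (hρ l)
      have h := mulip (((j:ℝ) - (l:ℝ)) * Δx) (((k:ℝ) - (l:ℝ)) * Δx)
      rw [show (((j:ℝ) - (l:ℝ)) * Δx) - (((k:ℝ) - (l:ℝ)) * Δx) = ((j:ℝ) - (k:ℝ)) * Δx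
          from by ring, abs_mul, abs_of_pos hΔx] at h
      linarith
    have hsb' : Summable (fun l : ℤ => (Cμ' * |(j:ℝ) - (k:ℝ)| * Δx) * ρ l) := hsum.mul_left _
    have hsn : Summable (fun l : ℤ =>
        ‖μ (((j:ℝ) - (l:ℝ)) * Δx) * ρ l - μ (((k:ℝ) - (l:ℝ)) * Δx) * ρ l‖) :=
      Summable.of_nonneg_of_le (fun _ => norm_nonneg _) hb hsb'
    have h1 := (norm_tsum_le_tsum_norm hsn).trans (Summable.tsum_le_tsum hb hsn hsb')
    rw [tsum_mul_left, Real.norm_eq_abs, ← hm0def] at h1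
    calc Δx * |∑' l : ℤ, (μ (((j:ℝ) - (l:ℝ)) * Δx) * ρ l - μ (((k:ℝ) - (l:ℝ)) * Δx) * ρ l)|
        ≤ Δx * (Cμ' * |(j:ℝ) - (k:ℝ)| * Δx * m0) := mul_le_mul_of_nonneg_left h1 hΔx.le
      _ = Cμ' * |(j:ℝ) - (k:ℝ)| * Δx^2 * m0 := by ring
  have hsb : ∀ j : ℤ, |sdisc μ θ Δx ρ j| ≤ 2*θ*Cμ'*Δx^2*m0 := by
    intro j
    unfold sdisc
    rw [abs_mul, abs_of_nonneg hθ0]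
    have h := hAdiff (j+1) (j-1)
    have e : |((j+1 : ℤ):ℝ) - ((j-1 : ℤ):ℝ)| = 2 := by
      push_cast
      rw [show ((j:ℝ)+1 - ((j:ℝ)-1)) = 2 from by ring]
      norm_num
    rw [e] at h
    nlinarith [abs_nonneg (Adisc μ Δx ρ (j+1) - Adisc μ Δx ρ (j-1)),
      mul_le_mul_of_nonneg_left h hθ0]
  -- ## Δf bound
  have hdf : ∀ j : ℤ, |f (intL θ ρ j) (AdiscL μ θ Δx ρ j) - f (intR θ ρ j) (AdiscR μ θ Δx ρ j)|
      ≤ gfun θ L M Cμ' Δx m0 ρ j := by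
    intro j
    have t1 := flip1 (intL θ ρ j) (intR θ ρ j) (AdiscL μ θ Δx ρ j)
    rw [show intL θ ρ j - intR θ ρ j = slp θ ρ j from by unfold intL intR; ring] at t1
    have t1' : L * |slp θ ρ j| ≤ L * (2*θ*|ρ (j+1) - ρ j|) :=
      mul_le_mul_of_nonneg_left (hσabs j).1 hL0.le
    have t2 := flip2 (intR θ ρ j) (AdiscL μ θ Δx ρ j) (AdiscR μ θ Δx ρ j)
    rw [show AdiscL μ θ Δx ρ j - AdiscR μ θ Δx ρ j = sdisc μ θ Δx ρ j
        from by unfold AdiscL AdiscR; ring] at t2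
    have hiR : |intR θ ρ j| ≤ ρ j + θ*|ρ j - ρ (j-1)| := by
      rw [abs_of_nonneg (hintR0 j)]; exact hintRle j
    have t2' : M * |intR θ ρ j| * |sdisc μ θ Δx ρ j|
        ≤ M * (ρ j + θ*|ρ j - ρ (j-1)|) * (2*θ*Cμ'*Δx^2*m0) := by
      refine mul_le_mul (mul_le_mul_of_nonneg_left hiR hM.le) (hsb j) (abs_nonneg _) ?_
      have : (0:ℝ) ≤ θ*|ρ j - ρ (j-1)| := by positivity
      nlinarith [hρ j, hM.le]
    have tri := abs_sub_le (f (intL θ ρ j) (AdiscL μ θ Δx ρ j))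
      (f (intR θ ρ j) (AdiscL μ θ Δx ρ j)) (f (intR θ ρ j) (AdiscR μ θ Δx ρ j))
    unfold gfun
    linarith
  -- ## mid-value bounds
  have hmidLb : ∀ j : ℤ, |midL f μ θ lam Δx ρ j| ≤ WLf θ lam L ρ j := by
    intro j
    have h1 : |f (intL θ ρ j) (AdiscL μ θ Δx ρ j)| ≤ L * intL θ ρ j := by
      have h := fbnd (intL θ ρ j) (AdiscL μ θ Δx ρ j)
      rwa [abs_of_nonneg (hintL0 j)] at h
    have h2 : |f (intR θ ρ j) (AdiscR μ θ Δx ρ j)| ≤ L * intR θ ρ j := by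
      have h := fbnd (intR θ ρ j) (AdiscR μ θ Δx ρ j)
      rwa [abs_of_nonneg (hintR0 j)] at h
    have tri : |midL f μ θ lam Δx ρ j| ≤ |intL θ ρ j|
        + lam/2 * |f (intL θ ρ j) (AdiscL μ θ Δx ρ j) - f (intR θ ρ j) (AdiscR μ θ Δx ρ j)| := by
      unfold midL
      refine (abs_sub _ _).trans ?_
      rw [abs_mul, abs_of_nonneg (by positivity : (0:ℝ) ≤ lam/2)]
    have h3 : lam/2 * |f (intL θ ρ j) (AdiscL μ θ Δx ρ j) - f (intR θ ρ j) (AdiscR μ θ Δx ρ j)|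
        ≤ lam/2 * (L * intL θ ρ j + L * intR θ ρ j) :=
      mul_le_mul_of_nonneg_left ((abs_sub _ _).trans (by linarith)) (by positivity)
    have h4 := hintsum j
    have h5 : lam/2 * (L * intL θ ρ j + L * intR θ ρ j) = lam * L * ρ j := by
      linear_combination (lam * L / 2) * h4
    rw [abs_of_nonneg (hintL0 j)] at tri
    unfold WLf
    linarith
  have hmidRb : ∀ j : ℤ, |midR f μ θ lam Δx ρ j| ≤ WRf θ lam L ρ j := by
    intro j
    have h1 : |f (intL θ ρ j) (AdiscL μ θ Δx ρ j)| ≤ L * intL θ ρ j := by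
      have h := fbnd (intL θ ρ j) (AdiscL μ θ Δx ρ j)
      rwa [abs_of_nonneg (hintL0 j)] at h
    have h2 : |f (intR θ ρ j) (AdiscR μ θ Δx ρ j)| ≤ L * intR θ ρ j := by
      have h := fbnd (intR θ ρ j) (AdiscR μ θ Δx ρ j)
      rwa [abs_of_nonneg (hintR0 j)] at h
    have tri : |midR f μ θ lam Δx ρ j| ≤ |intR θ ρ j|
        + lam/2 * |f (intL θ ρ j) (AdiscL μ θ Δx ρ j) - f (intR θ ρ j) (AdiscR μ θ Δx ρ j)| := by
      unfold midR
      refine (abs_sub _ _).trans ?_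
      rw [abs_mul, abs_of_nonneg (by positivity : (0:ℝ) ≤ lam/2)]
    have h3 : lam/2 * |f (intL θ ρ j) (AdiscL μ θ Δx ρ j) - f (intR θ ρ j) (AdiscR μ θ Δx ρ j)|
        ≤ lam/2 * (L * intL θ ρ j + L * intR θ ρ j) :=
      mul_le_mul_of_nonneg_left ((abs_sub _ _).trans (by linarith)) (by positivity)
    have h4 := hintsum j
    have h5 : lam/2 * (L * intL θ ρ j + L * intR θ ρ j) = lam * L * ρ j := by
      linear_combination (lam * L / 2) * h4
    rw [abs_of_nonneg (hintR0 j)] at tri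
    unfold WRf
    linarith
  -- ## summability of interface values
  have hsum_iL : Summable (intL θ ρ) :=
    Summable.of_nonneg_of_le hintL0 hintLle (hsum.add (hTV.mul_left θ))
  have hsum_iR : Summable (intR θ ρ) :=
    Summable.of_nonneg_of_le hintR0 hintRle (hsum.add (hTVm.mul_left θ))
  have hiLiR : (∑' j : ℤ, intL θ ρ j) + (∑' j : ℤ, intR θ ρ j) = 2 * m0 := by
    rw [← Summable.tsum_add hsum_iL hsum_iR]
    calc ∑' j : ℤ, (intL θ ρ j + intR θ ρ j) = ∑' j : ℤ, 2 * ρ j := tsum_congr hintsum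
      _ = 2 * m0 := by rw [tsum_mul_left, ← hm0def]
  have hsum_WL : Summable (WLf θ lam L ρ) := by
    unfold WLf; exact hsum_iL.add (hsum.mul_left _)
  have hsum_WR : Summable (WRf θ lam L ρ) := by
    unfold WRf; exact hsum_iR.add (hsum.mul_left _)
  have hSWL : ∑' j : ℤ, WLf θ lam L ρ j = (∑' j : ℤ, intL θ ρ j) + lam*L*m0 := by
    unfold WLf
    rw [Summable.tsum_add hsum_iL (hsum.mul_left _), tsum_mul_left, ← hm0def]
  have hSWR : ∑' j : ℤ, WRf θ lam L ρ j = (∑' j : ℤ, intR θ ρ j) + lam*L*m0 := by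
    unfold WRf
    rw [Summable.tsum_add hsum_iR (hsum.mul_left _), tsum_mul_left, ← hm0def]
  -- ## Amid estimates
  have hconvM : ∀ j : ℤ, Summable (fun l : ℤ =>
      μ (((j:ℝ) + 1 - (l:ℝ)) * Δx) * midR f μ θ lam Δx ρ l
      + μ (((j:ℝ) - (l:ℝ)) * Δx) * midL f μ θ lam Δx ρ l) := by
    intro j
    have hCμ0' : 0 ≤ Cμ := le_trans (abs_nonneg _) (hCμb' 0)
    refine Summable.add ?_ ?_
    · refine Summable.of_norm_bounded
        (hsum_WR.mul_left Cμ) (fun l => ?_)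
      rw [norm_mul, Real.norm_eq_abs, Real.norm_eq_abs]
      exact mul_le_mul (hCμb' _) (hmidRb l) (abs_nonneg _) hCμ0'
    · refine Summable.of_norm_bounded
        (hsum_WL.mul_left Cμ) (fun l => ?_)
      rw [norm_mul, Real.norm_eq_abs, Real.norm_eq_abs]
      exact mul_le_mul (hCμb' _) (hmidLb l) (abs_nonneg _) hCμ0'
  have hAmidDiff : ∀ j : ℤ, |Amid f μ θ lam Δx ρ j - Amid f μ θ lam Δx ρ (j-1)|
      ≤ Cμ'*Δx^2*(1+lam*L)*m0 := by
    intro j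
    unfold Amid
    rw [← mul_sub, ← Summable.tsum_sub (hconvM j) (hconvM (j-1)), abs_mul,
      abs_of_nonneg (by positivity : (0:ℝ) ≤ Δx/2)]
    have hb : ∀ l : ℤ, ‖(μ (((j:ℝ) + 1 - (l:ℝ)) * Δx) * midR f μ θ lam Δx ρ l
        + μ (((j:ℝ) - (l:ℝ)) * Δx) * midL f μ θ lam Δx ρ l)
        - (μ ((((j - 1 : ℤ):ℝ) + 1 - (l:ℝ)) * Δx) * midR f μ θ lam Δx ρ l
        + μ ((((j - 1 : ℤ):ℝ) - (l:ℝ)) * Δx) * midL f μ θ lam Δx ρ l)‖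
        ≤ (Cμ' * Δx) * (WRf θ lam L ρ l + WLf θ lam L ρ l) := by
      intro l
      have ecast : ((j - 1 : ℤ):ℝ) = (j:ℝ) - 1 := by push_cast; ring
      rw [ecast]
      have b1 : |μ (((j:ℝ) + 1 - (l:ℝ)) * Δx) - μ ((((j:ℝ) - 1) + 1 - (l:ℝ)) * Δx)|
          ≤ Cμ' * Δx := by
        have h := mulip (((j:ℝ) + 1 - (l:ℝ)) * Δx) ((((j:ℝ) - 1) + 1 - (l:ℝ)) * Δx)
        rw [show ((j:ℝ) + 1 - (l:ℝ)) * Δx - (((j:ℝ) - 1) + 1 - (l:ℝ)) * Δx = Δx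
            from by ring, abs_of_pos hΔx] at h
        exact h
      have b2 : |μ (((j:ℝ) - (l:ℝ)) * Δx) - μ ((((j:ℝ) - 1) - (l:ℝ)) * Δx)| ≤ Cμ' * Δx := by
        have h := mulip (((j:ℝ) - (l:ℝ)) * Δx) ((((j:ℝ) - 1) - (l:ℝ)) * Δx)
        rw [show ((j:ℝ) - (l:ℝ)) * Δx - (((j:ℝ) - 1) - (l:ℝ)) * Δx = Δx
            from by ring, abs_of_pos hΔx] at h
        exact h
      have e : (μ (((j:ℝ) + 1 - (l:ℝ)) * Δx) * midR f μ θ lam Δx ρ l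
          + μ (((j:ℝ) - (l:ℝ)) * Δx) * midL f μ θ lam Δx ρ l)
          - (μ ((((j:ℝ) - 1) + 1 - (l:ℝ)) * Δx) * midR f μ θ lam Δx ρ l
          + μ ((((j:ℝ) - 1) - (l:ℝ)) * Δx) * midL f μ θ lam Δx ρ l)
          = (μ (((j:ℝ) + 1 - (l:ℝ)) * Δx) - μ ((((j:ℝ) - 1) + 1 - (l:ℝ)) * Δx))
              * midR f μ θ lam Δx ρ l
          + (μ (((j:ℝ) - (l:ℝ)) * Δx) - μ ((((j:ℝ) - 1) - (l:ℝ)) * Δx))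
              * midL f μ θ lam Δx ρ l := by ring
      rw [e, Real.norm_eq_abs]
      refine (abs_add_le _ _).trans ?_
      rw [abs_mul, abs_mul]
      have q1 : |μ (((j:ℝ) + 1 - (l:ℝ)) * Δx) - μ ((((j:ℝ) - 1) + 1 - (l:ℝ)) * Δx)|
          * |midR f μ θ lam Δx ρ l| ≤ (Cμ' * Δx) * WRf θ lam L ρ l :=
        mul_le_mul b1 (hmidRb l) (abs_nonneg _) (by positivity)
      have q2 : |μ (((j:ℝ) - (l:ℝ)) * Δx) - μ ((((j:ℝ) - 1) - (l:ℝ)) * Δx)|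
          * |midL f μ θ lam Δx ρ l| ≤ (Cμ' * Δx) * WLf θ lam L ρ l :=
        mul_le_mul b2 (hmidLb l) (abs_nonneg _) (by positivity)
      linarith
    have hWsum : Summable (fun l : ℤ => (Cμ' * Δx) * (WRf θ lam L ρ l + WLf θ lam L ρ l)) :=
      (hsum_WR.add hsum_WL).mul_left _
    have hsn : Summable (fun l : ℤ => ‖(μ (((j:ℝ) + 1 - (l:ℝ)) * Δx) * midR f μ θ lam Δx ρ l
        + μ (((j:ℝ) - (l:ℝ)) * Δx) * midL f μ θ lam Δx ρ l)
        - (μ ((((j - 1 : ℤ):ℝ) + 1 - (l:ℝ)) * Δx) * midR f μ θ lam Δx ρ l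
        + μ ((((j - 1 : ℤ):ℝ) - (l:ℝ)) * Δx) * midL f μ θ lam Δx ρ l)‖) :=
      Summable.of_nonneg_of_le (fun _ => norm_nonneg _) hb hWsum
    have h1 := (norm_tsum_le_tsum_norm hsn).trans (Summable.tsum_le_tsum hb hsn hWsum)
    rw [Real.norm_eq_abs, tsum_mul_left, Summable.tsum_add hsum_WR hsum_WL, hSWR, hSWL] at h1
    have h2 := mul_le_mul_of_nonneg_left h1 (by positivity : (0:ℝ) ≤ Δx/2)
    refine h2.trans ?_
    refine le_of_eq ?_
    linear_combination (Cμ' * Δx^2 / 2) * hiLiR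
  -- ## pointwise main bound
  have hmain : ∀ j : ℤ, |mhUpdate f μ θ α lam Δx ρ j - ρ j|
      ≤ lam * Gfun θ lam L α M (Cμ'*Δx^2*(1+lam*L)*m0) Cμ' Δx m0 ρ j := by
    intro j
    have e : mhUpdate f μ θ α lam Δx ρ j - ρ j
        = -(lam * (numFlux f α lam (midL f μ θ lam Δx ρ j) (midR f μ θ lam Δx ρ (j+1))
            (Amid f μ θ lam Δx ρ j)
          - numFlux f α lam (midL f μ θ lam Δx ρ (j-1)) (midR f μ θ lam Δx ρ j)
            (Amid f μ θ lam Δx ρ (j-1)))) := by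
      unfold mhUpdate; ring
    rw [e, abs_neg, abs_mul, abs_of_pos hlam0]
    refine mul_le_mul_of_nonneg_left ?_ hlam0.le
    have hbL : |midL f μ θ lam Δx ρ j - midL f μ θ lam Δx ρ (j-1)|
        ≤ (1+θ)*|ρ j - ρ (j-1)|
          + lam/2*(gfun θ L M Cμ' Δx m0 ρ j + gfun θ L M Cμ' Δx m0 ρ (j-1)) := by
      unfold midL
      exact midstep_bound hlam0.le (haL j) (hdf j) (hdf (j-1))
    have hbR : |midR f μ θ lam Δx ρ (j+1) - midR f μ θ lam Δx ρ j|
        ≤ (1+θ)*|ρ (j+1) - ρ j|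
          + lam/2*(gfun θ L M Cμ' Δx m0 ρ (j+1) + gfun θ L M Cμ' Δx m0 ρ j) := by
      unfold midR
      exact midstep_bound hlam0.le (haR j) (hdf (j+1)) (hdf j)
    have hwL0 : 0 ≤ WLf θ lam L ρ (j-1) := by
      unfold WLf
      exact add_nonneg (hintL0 _) (mul_nonneg (mul_nonneg hlam0.le hL0.le) (hρ _))
    have hwR0 : 0 ≤ WRf θ lam L ρ j := by
      unfold WRf
      exact add_nonneg (hintR0 _) (mul_nonneg (mul_nonneg hlam0.le hL0.le) (hρ _))
    have hkA0 : 0 ≤ Cμ'*Δx^2*(1+lam*L)*m0 :=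
      mul_nonneg (mul_nonneg (mul_nonneg hCμ0 (sq_nonneg Δx)) (by linarith)) hm00
    refine le_trans (fluxdiff_bound f hlam0 hL0.le hM.le hα0.le flip1 flip2
      hbL hbR (hmidLb (j-1)) (hmidRb j) (hAmidDiff j) hwL0 hwR0 hkA0) ?_
    refine le_of_eq ?_
    unfold Gfun
    ring
  -- ## summability of gfun and sums
  have hsum_gf : Summable (gfun θ L M Cμ' Δx m0 ρ) := by
    unfold gfun
    exact (hTV.mul_left (2*θ*L)).add
      (((hsum.add (hTVm.mul_left θ)).mul_left M).mul_right (2*θ*Cμ'*Δx^2*m0))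
  have hSgf : ∑' j : ℤ, gfun θ L M Cμ' Δx m0 ρ j
      = 2*θ*L*TV + M*(m0 + θ*TV)*(2*θ*Cμ'*Δx^2*m0) := by
    unfold gfun
    rw [Summable.tsum_add (hTV.mul_left (2*θ*L))
        (((hsum.add (hTVm.mul_left θ)).mul_left M).mul_right (2*θ*Cμ'*Δx^2*m0)),
      tsum_mul_left, tsum_mul_right, tsum_mul_left,
      Summable.tsum_add hsum (hTVm.mul_left θ), tsum_mul_left, hTVmeq, ← hTVdef, ← hm0def]
  have hgm_s : Summable (fun j : ℤ => gfun θ L M Cμ' Δx m0 ρ (j-1)) := by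
    refine (shift_summable hsum_gf (-1)).congr (fun j => ?_)
    rw [show j + -1 = j - 1 from by ring]
  have hgp_s : Summable (fun j : ℤ => gfun θ L M Cμ' Δx m0 ρ (j+1)) :=
    shift_summable hsum_gf 1
  have hgm_eq : ∑' j : ℤ, gfun θ L M Cμ' Δx m0 ρ (j-1) = ∑' j : ℤ, gfun θ L M Cμ' Δx m0 ρ j := by
    rw [← shift_tsum (gfun θ L M Cμ' Δx m0 ρ) (-1)]
    exact tsum_congr fun j => by rw [show j - 1 = j + -1 from by ring]
  have hgp_eq : ∑' j : ℤ, gfun θ L M Cμ' Δx m0 ρ (j+1) = ∑' j : ℤ, gfun θ L M Cμ' Δx m0 ρ j :=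
    shift_tsum (gfun θ L M Cμ' Δx m0 ρ) 1
  have hWLm_s : Summable (fun j : ℤ => WLf θ lam L ρ (j-1)) := by
    refine (shift_summable hsum_WL (-1)).congr (fun j => ?_)
    rw [show j + -1 = j - 1 from by ring]
  have hWLm_eq : ∑' j : ℤ, WLf θ lam L ρ (j-1) = ∑' j : ℤ, WLf θ lam L ρ j := by
    rw [← shift_tsum (WLf θ lam L ρ) (-1)]
    exact tsum_congr fun j => by rw [show j - 1 = j + -1 from by ring]
  -- ## sum of Gfun
  have hin1 : Summable (fun j : ℤ => (1+θ)*|ρ j - ρ (j-1)| + (1+θ)*|ρ (j+1) - ρ j|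
      + lam/2 * (gfun θ L M Cμ' Δx m0 ρ (j-1) + 2 * gfun θ L M Cμ' Δx m0 ρ j
        + gfun θ L M Cμ' Δx m0 ρ (j+1))) :=
    ((hTVm.mul_left (1+θ)).add (hTV.mul_left (1+θ))).add
      (((hgm_s.add (hsum_gf.mul_left 2)).add hgp_s).mul_left (lam/2))
  have hinner1 : ∑' j : ℤ, ((1+θ)*|ρ j - ρ (j-1)| + (1+θ)*|ρ (j+1) - ρ j|
      + lam/2 * (gfun θ L M Cμ' Δx m0 ρ (j-1) + 2 * gfun θ L M Cμ' Δx m0 ρ j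
        + gfun θ L M Cμ' Δx m0 ρ (j+1)))
      = (1+θ)*TV + (1+θ)*TV + lam/2 * (4 * ∑' j : ℤ, gfun θ L M Cμ' Δx m0 ρ j) := by
    rw [Summable.tsum_add ((hTVm.mul_left (1+θ)).add (hTV.mul_left (1+θ)))
        (((hgm_s.add (hsum_gf.mul_left 2)).add hgp_s).mul_left (lam/2)),
      Summable.tsum_add (hTVm.mul_left (1+θ)) (hTV.mul_left (1+θ)),
      tsum_mul_left, tsum_mul_left, tsum_mul_left,
      Summable.tsum_add (hgm_s.add (hsum_gf.mul_left 2)) hgp_s,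
      Summable.tsum_add hgm_s (hsum_gf.mul_left 2), tsum_mul_left, hgm_eq, hgp_eq, hTVmeq, ← hTVdef]
    ring
  have hinner2 : ∑' j : ℤ, (WLf θ lam L ρ (j-1) + WRf θ lam L ρ j)
      = (∑' j : ℤ, WLf θ lam L ρ j) + ∑' j : ℤ, WRf θ lam L ρ j := by
    rw [Summable.tsum_add hWLm_s hsum_WR, hWLm_eq]
  have hsum_G : Summable (Gfun θ lam L α M (Cμ'*Δx^2*(1+lam*L)*m0) Cμ' Δx m0 ρ) := by
    unfold Gfun
    exact (hin1.mul_left _).add ((hWLm_s.add hsum_WR).mul_left _)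
  have hGsum : ∑' j : ℤ, Gfun θ lam L α M (Cμ'*Δx^2*(1+lam*L)*m0) Cμ' Δx m0 ρ j
      = (L/2 + α/(2*lam)) * ((1+θ)*TV + (1+θ)*TV
          + lam/2 * (4 * ∑' j : ℤ, gfun θ L M Cμ' Δx m0 ρ j))
        + M*(Cμ'*Δx^2*(1+lam*L)*m0)/2 * (2*m0 + 2*(lam*L)*m0) := by
    unfold Gfun
    rw [Summable.tsum_add (hin1.mul_left _) ((hWLm_s.add hsum_WR).mul_left _),
      tsum_mul_left, tsum_mul_left, hinner1, hinner2, hSWL, hSWR]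
    linear_combination (M*(Cμ'*Δx^2*(1+lam*L)*m0)/2) * hiLiR
  -- ## final inequality
  have hfinal : ∑' j : ℤ, Gfun θ lam L α M (Cμ'*Δx^2*(1+lam*L)*m0) Cμ' Δx m0 ρ j
      ≤ (1/lam) * TV + M * Cμ' * (1 + θ)^2 * (Δx * m0)^2 * (α + lam*L + (1 + lam*L)^2) := by
    rw [hGsum, hSgf]
    have hxα0 : (0:ℝ) ≤ lam*L + α := by linarith
    have c1 : (lam*L + α) * (1 + θ + 2*θ*(lam*L)) ≤ 1 := by
      have h1 : θ*(lam*L+α) ≤ (1/2)*(lam*L+α) := mul_le_mul_of_nonneg_right hθ1 hxα0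
      have h2 : θ*(lam*L*(lam*L+α)) ≤ (1/2)*(lam*L*(lam*L+α)) :=
        mul_le_mul_of_nonneg_right hθ1 (mul_nonneg hlamL0 hxα0)
      have h3 : (lam*L)*(lam*L+α) ≤ 2/27*(lam*L+α) := mul_le_mul_of_nonneg_right hlamL2 hxα0
      have h4 : lam*L + α ≤ 10/27 := by linarith [hα1.le]
      linarith
    have c1' : (lam*L + α) * (1 + θ + 2*θ*(lam*L)) * TV ≤ 1 * TV :=
      mul_le_mul_of_nonneg_right c1 hTV0
    have c2 : 2*θ*(1+2*θ) ≤ (1+θ)^2 := by nlinarith [hθ0, hθ1]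
    have c3 : m0 + θ*TV ≤ (1+2*θ)*m0 := by
      have := mul_le_mul_of_nonneg_left hTVle hθ0
      linarith
    have t1 : (lam*L+α) * (2*θ) * (m0 + θ*TV) ≤ (lam*L+α) * (2*θ) * ((1+2*θ)*m0) :=
      mul_le_mul_of_nonneg_left c3 (mul_nonneg hxα0 hθ2)
    have t2 : (lam*L+α) * (2*θ) * ((1+2*θ)*m0) ≤ (lam*L+α) * (1+θ)^2 * m0 := by
      have h := mul_le_mul_of_nonneg_right c2 (mul_nonneg hxα0 hm00)
      linarith [h]
    have hc0 : (0:ℝ) ≤ lam*M*Cμ'*Δx^2*m0 :=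
      mul_nonneg (mul_nonneg (mul_nonneg (mul_nonneg hlam0.le hM.le) hCμ0) (sq_nonneg Δx)) hm00
    have A1 : (lam*L+α) * lam * M * (m0 + θ*TV) * (2*θ*Cμ'*Δx^2*m0)
        ≤ lam * (M*Cμ'*(1+θ)^2*(Δx*m0)^2*(α + lam*L)) := by
      have h := mul_le_mul_of_nonneg_left (t1.trans t2) hc0
      linarith [h]
    have h1θ : (1:ℝ) ≤ (1+θ)^2 := by nlinarith [hθ0]
    have hc2 : (0:ℝ) ≤ lam*M*Cμ'*Δx^2*m0^2*(1+lam*L)^2 :=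
      mul_nonneg (mul_nonneg (mul_nonneg (mul_nonneg (mul_nonneg hlam0.le hM.le) hCμ0)
        (sq_nonneg Δx)) (sq_nonneg m0)) (sq_nonneg (1+lam*L))
    have A2 : lam * (M*(Cμ'*Δx^2*(1+lam*L)*m0)/2 * (2*m0 + 2*(lam*L)*m0))
        ≤ lam * (M*Cμ'*(1+θ)^2*(Δx*m0)^2*(1 + lam*L)^2) := by
      have h := mul_le_mul_of_nonneg_left h1θ hc2
      linarith [h]
    -- reduce to a lam-scaled inequality
    refine le_of_mul_le_mul_left ?_ hlam0
    have eL : ∀ Q R : ℝ, lam * ((L/2 + α/(2*lam))*Q + R) = (lam*L + α)/2 * Q + lam * R := by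
      intro Q R
      field_simp
    rw [eL]
    have eR : lam * ((1/lam) * TV + M * Cμ' * (1 + θ)^2 * (Δx * m0)^2 * (α + lam*L + (1 + lam*L)^2))
        = TV + lam * (M * Cμ' * (1 + θ)^2 * (Δx * m0)^2 * (α + lam*L + (1 + lam*L)^2)) := by
      field_simp
    rw [eR]
    linarith [c1', A1, A2]
  -- ## conclusion
  have hsum_lhs : Summable (fun j : ℤ => |mhUpdate f μ θ α lam Δx ρ j - ρ j|) :=
    Summable.of_nonneg_of_le (fun _ => abs_nonneg _) hmain (hsum_G.mul_left lam)
  calc Δx * ∑' j : ℤ, |mhUpdate f μ θ α lam Δx ρ j - ρ j|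
      ≤ Δx * ∑' j : ℤ, lam * Gfun θ lam L α M (Cμ'*Δx^2*(1+lam*L)*m0) Cμ' Δx m0 ρ j :=
        mul_le_mul_of_nonneg_left (Summable.tsum_le_tsum hmain hsum_lhs (hsum_G.mul_left lam)) hΔx.le
    _ = Δx * (lam * ∑' j : ℤ, Gfun θ lam L α M (Cμ'*Δx^2*(1+lam*L)*m0) Cμ' Δx m0 ρ j) := by
        rw [tsum_mul_left]
    _ = Δt * ∑' j : ℤ, Gfun θ lam L α M (Cμ'*Δx^2*(1+lam*L)*m0) Cμ' Δx m0 ρ j := by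
        rw [hlam]; field_simp
    _ ≤ Δt * ((1/lam) * TV + M * Cμ' * (1 + θ)^2 * (Δx * m0)^2 * (α + lam*L + (1 + lam*L)^2)) :=
        mul_le_mul_of_nonneg_left hfinal hΔt.le
    _ = Δt * ((1/lam) * TV + M * Cμ' * (1 + θ)^2 * (Δx * m0)^2 * (α + lam*L + (1 + lam*L)^2)) := rfl
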